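/- Every valuation λ on a unital C*-algebra A satisfies λ(1) = 1, and λ(ab) = λ(a)λ(b) for all self-adjoint a, b ∈ A with ab = ba. -/

import Mathlib

open WeakDual WeakDual.CharacterSpace

variable (A : Type*) [NormedRing A] [StarRing A] [CStarRing A] [NormedAlgebra ℂ A]
  [StarModule ℂ A] [CompleteSpace A]

/-- A valuation on `A`: a nonzero map `A_sa → ℝ` that is dispersion-free
(`λ(a²) = λ(a)²`) and linear on commuting operators. -/
structure IsValuation (l : selfAdjoint A → ℝ) : Prop where
  ne_zero : l ≠ 0
  dispersionFree : ∀ a b : selfAdjoint A, (b : A) = (a : A) * (a : A) → l b = l a ^ 2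
  linear : ∀ (s t : ℝ) (a b c : selfAdjoint A), (a : A) * (b : A) = (b : A) * (a : A) →
    (c : A) = s • (a : A) + t • (b : A) → l c = s * l a + t * l b

/-- Every valuation `λ` on a unital C*-algebra satisfies `λ(1) = 1`, and
`λ(ab) = λ(a)λ(b)` for all commuting self-adjoint `a, b`. -/
theorem valuation_map_one_and_mul (l : selfAdjoint A → ℝ) (hl : IsValuation A l) :
    l 1 = 1 ∧
    ∀ a b c : selfAdjoint A, (a : A) * (b : A) = (b : A) * (a : A) →
      (c : A) = (a : A) * (b : A) → l c = l a * l b := by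
  have mul_rule : ∀ a b c : selfAdjoint A, (a : A) * (b : A) = (b : A) * (a : A) →
      (c : A) = (a : A) * (b : A) → l c = l a * l b := by
    intro a b c h hc
    have ha := a.2
    have hb := b.2
    rw [selfAdjoint.mem_iff] at ha hb
    -- squares
    have a2mem : (a : A) * (a : A) ∈ selfAdjoint A := by
      rw [selfAdjoint.mem_iff, star_mul, ha]
    have b2mem : (b : A) * (b : A) ∈ selfAdjoint A := by
      rw [selfAdjoint.mem_iff, star_mul, hb]
    set a2 : selfAdjoint A := ⟨(a : A) * (a : A), a2mem⟩
    set b2 : selfAdjoint A := ⟨(b : A) * (b : A), b2mem⟩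
    set sq : selfAdjoint A := a2 + b2
    set p : selfAdjoint A := a + b
    have p2mem : (p : A) * (p : A) ∈ selfAdjoint A := by
      rw [selfAdjoint.mem_iff, star_mul]
      have hp : star (p : A) = (p : A) := by
        rw [selfAdjoint.mem_iff] at *
        exact p.2
      rw [hp]
    set p2 : selfAdjoint A := ⟨(p : A) * (p : A), p2mem⟩
    -- key coercion facts
    have hpc : (p : A) = (a : A) + (b : A) := rfl
    have hsqc : (sq : A) = (a : A) * (a : A) + (b : A) * (b : A) := rfl
    -- l p = l a + l b
    have h1 : l p = 1 * l a + 1 * l b := by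
      refine hl.linear 1 1 a b p h ?_
      simp [hpc]
    -- l sq = l a2 + l b2
    have hcomm2 : (a2 : A) * (b2 : A) = (b2 : A) * (a2 : A) := by
      show ((a : A) * a) * ((b : A) * b) = ((b : A) * b) * ((a : A) * a)
      calc ((a : A) * a) * ((b : A) * b) = (a:A) * ((a:A) * (b:A)) * b := by noncomm_ring
        _ = (a:A) * ((b:A) * (a:A)) * b := by rw [h]
        _ = ((a:A) * (b:A)) * ((a:A) * (b:A)) := by noncomm_ring
        _ = ((b:A) * (a:A)) * ((b:A) * (a:A)) := by rw [h]
        _ = (b:A) * ((a:A) * (b:A)) * a := by noncomm_ring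
        _ = (b:A) * ((b:A) * (a:A)) * a := by rw [h]
        _ = ((b : A) * b) * ((a : A) * a) := by noncomm_ring
    have h2 : l sq = 1 * l a2 + 1 * l b2 := by
      refine hl.linear 1 1 a2 b2 sq hcomm2 ?_
      simp [hsqc]
      rfl
    -- l p2 = l sq + 2 * l c
    have hcomm3 : (sq : A) * (c : A) = (c : A) * (sq : A) := by
      rw [hsqc, hc]
      calc ((a:A) * a + (b:A) * b) * ((a:A) * (b:A))
          = (a:A) * (a:A) * (a:A) * (b:A) + (b:A) * ((b:A) * ((a:A) * (b:A))) := by noncomm_ring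
        _ = (a:A) * (a:A) * (a:A) * (b:A) + (b:A) * (((a:A) * (b:A)) * (b:A)) := by
              rw [show (b:A) * ((a:A)*(b:A)) = ((a:A)*(b:A)) * (b:A) by
                rw [← mul_assoc, ← h, mul_assoc]]
        _ = ((a:A) * (a:A)) * ((a:A) * (b:A)) + ((b:A) * (a:A)) * ((b:A) * (b:A)) := by noncomm_ring
        _ = ((a:A) * (a:A)) * ((a:A) * (b:A)) + ((a:A) * (b:A)) * ((b:A) * (b:A)) := by rw [h]
        _ = ((a:A) * (b:A)) * ((a:A) * (a:A) + (b:A) * (b:A)) := by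
              rw [mul_add]
              congr 1
              calc ((a:A)*(a:A))*((a:A)*(b:A)) = (a:A)*((a:A)*((a:A)*(b:A))) := by noncomm_ring
                _ = (a:A)*((a:A)*((b:A)*(a:A))) := by rw [h]
                _ = (a:A)*(((a:A)*(b:A))*(a:A)) := by noncomm_ring
                _ = (a:A)*(((b:A)*(a:A))*(a:A)) := by rw [h]
                _ = ((a:A)*(b:A))*((a:A)*(a:A)) := by noncomm_ring
    have h3 : l p2 = 1 * l sq + 2 * l c := by
      refine hl.linear 1 2 sq c p2 hcomm3 ?_
      show (p : A) * (p : A) = (1:ℝ) • (sq : A) + (2:ℝ) • (c : A)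
      rw [hpc, hsqc, hc, one_smul]
      rw [show ((2:ℝ) • ((a:A)*(b:A)) : A) = (a:A)*(b:A) + (a:A)*(b:A) from two_smul ℝ _]
      rw [mul_add, add_mul, add_mul]
      rw [h]
      abel
    -- dispersion
    have h4 : l p2 = l p ^ 2 := hl.dispersionFree p p2 rfl
    have h5 : l a2 = l a ^ 2 := hl.dispersionFree a a2 rfl
    have h6 : l b2 = l b ^ 2 := hl.dispersionFree b b2 rfl
    have key : 1 * (1 * l a ^ 2 + 1 * l b ^ 2) + 2 * l c = (1 * l a + 1 * l b) ^ 2 := by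
      rw [← h5, ← h6, ← h2, ← h3, h4, h1]
    linear_combination key / 2
  have hone : l 1 = 1 := by
    have h1 : l 1 = l 1 ^ 2 := hl.dispersionFree 1 1 (by rw [selfAdjoint.val_one, mul_one])
    by_contra hne
    have h0 : l 1 = 0 := by
      have : l 1 * (l 1 - 1) = 0 := by nlinarith
      rcases mul_eq_zero.mp this with h | h
      · exact h
      · exact absurd (by linarith) hne
    apply hl.ne_zero
    funext a
    have := mul_rule a 1 a (by rw [selfAdjoint.val_one, mul_one, one_mul]) (by rw [selfAdjoint.val_one, mul_one])
    rw [Pi.zero_apply, this, h0, mul_zero]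
  exact ⟨hone, mul_rule⟩
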